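/- Let A be compact, convex, with differentiable boundary and 0 ∈ int(A). If x ∈ ∂A satisfies V^⊥ ⊆ ker⟨∇μ_A(x), ·⟩, then p_V(x) ∈ ∂_V(p_V(A)). -/

import Mathlib

open scoped RealInnerProductSpace

open Set

/-- Subgradient inequality for a convex function differentiable at a point. -/
lemma convex_subgrad {E : Type*} [NormedAddCommGroup E] [InnerProductSpace ℝ E] [CompleteSpace E]
    {f : E → ℝ} (hf : ConvexOn ℝ univ f) {x g : E} (hg : HasGradientAt f g x) (y : E) :
    ⟪g, y - x⟫ ≤ f y - f x := by
  have hL : HasFDerivAt f ((InnerProductSpace.toDual ℝ E) g) x := hg.hasFDerivAt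
  have hL' : HasFDerivAt f ((InnerProductSpace.toDual ℝ E) g) (x + (0:ℝ) • (y - x)) := by
    simpa using hL
  have hline : HasDerivAt (fun t : ℝ => x + t • (y - x)) (y - x) 0 := by
    simpa using ((hasDerivAt_id (0:ℝ)).smul_const (y - x)).const_add x
  have hφ : HasDerivAt (fun t : ℝ => f (x + t • (y - x))) ⟪g, y - x⟫ 0 := by
    have h := hL'.comp_hasDerivAt (0:ℝ) hline
    exact h
  have hslope : Filter.Tendsto (slope (fun t : ℝ => f (x + t • (y - x))) 0)
      (nhdsWithin 0 (Ioi 0)) (nhds ⟪g, y - x⟫) := by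
    have h := (hasDerivWithinAt_iff_tendsto_slope).mp (hφ.hasDerivWithinAt (s := Ioi (0:ℝ)))
    rwa [Set.diff_singleton_eq_self (by simp)] at h
  refine le_of_tendsto hslope ?_
  filter_upwards [Ioc_mem_nhdsGT_of_mem (by simp : (0:ℝ) ∈ Ico (0:ℝ) 1)] with t ht
  have ht0 : 0 < t := ht.1
  have key : f (x + t • (y - x)) ≤ f x + t * (f y - f x) := by
    have hc := hf.2 (mem_univ x) (mem_univ y)
      (show (0:ℝ) ≤ 1 - t by linarith [ht.2]) ht0.le (by ring : (1 - t) + t = 1)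
    have hxy : (1 - t) • x + t • y = x + t • (y - x) := by
      simp [smul_sub, sub_smul]; abel
    rw [hxy, smul_eq_mul, smul_eq_mul] at hc
    nlinarith [hc]
  show slope (fun t : ℝ => f (x + t • (y - x))) 0 t ≤ f y - f x
  rw [slope_def_field]
  simp only [zero_smul, add_zero]
  rw [div_le_iff₀ (by linarith : (0:ℝ) < t - 0)]
  nlinarith

theorem projection_mem_frontier_of_orthogonal_supporting
    {E : Type*} [NormedAddCommGroup E] [InnerProductSpace ℝ E] [FiniteDimensional ℝ E]
    (A : Set E) (hcpt : IsCompact A) (hconv : Convex ℝ A)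
    (h0 : (0 : E) ∈ interior A)
    (hC1 : ContDiffOn ℝ 1 (gauge A) {0}ᶜ)
    (V : Submodule ℝ E) (hV : V ≠ ⊥)
    (x : E) (hx : x ∈ frontier A)
    (hker : ∀ v ∈ Vᗮ, ⟪gradient (gauge A) x, v⟫ = 0) :
    V.orthogonalProjectionOnto x ∈ frontier ((V.orthogonalProjectionOnto) '' A) := by
  set g := gradient (gauge A) x with hg
  have hA0 : A ∈ nhds (0 : E) := mem_interior_iff_mem_nhds.mp h0
  have habs : Absorbent ℝ A := absorbent_nhds_zero hA0
  have hgauge1 : gauge A x = 1 := (gauge_eq_one_iff_mem_frontier hconv hA0).mpr hx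
  have hx0 : x ≠ 0 := by
    intro h; rw [h, gauge_zero] at hgauge1; norm_num at hgauge1
  -- differentiability and gradient
  have hdiff : DifferentiableAt ℝ (gauge A) x :=
    (hC1.contDiffAt ((isOpen_compl_singleton).mem_nhds hx0)).differentiableAt one_ne_zero
  have hgrad : HasGradientAt (gauge A) g x := hdiff.hasGradientAt
  -- convexity of gauge
  have hconvOn : ConvexOn ℝ univ (gauge A) := by
    refine ⟨convex_univ, fun u _ v _ a b ha hb hab => ?_⟩
    calc gauge A (a • u + b • v) ≤ gauge A (a • u) + gauge A (b • v) :=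
          gauge_add_le hconv habs _ _
      _ = a * gauge A u + b * gauge A v := by
          rw [gauge_smul_of_nonneg ha, gauge_smul_of_nonneg hb]; simp [smul_eq_mul]
  have hsub : ∀ y, ⟪g, y - x⟫ ≤ gauge A y - 1 := by
    intro y
    have := convex_subgrad hconvOn hgrad y
    rwa [hgauge1] at this
  -- ⟪g, x⟫ = 1
  have hgx : ⟪g, x⟫ = 1 := by
    have h1 := hsub 0
    have h2 := hsub ((2:ℝ) • x)
    rw [gauge_zero] at h1
    have h2' : gauge A ((2:ℝ) • x) = 2 := by
      rw [gauge_smul_of_nonneg (by norm_num : (0:ℝ) ≤ 2), hgauge1]; simp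
    rw [h2'] at h2
    have e1 : ⟪g, (0:E) - x⟫ = -⟪g, x⟫ := by simp
    have e2 : ⟪g, (2:ℝ) • x - x⟫ = ⟪g, x⟫ := by
      rw [show (2:ℝ) • x - x = x by module]
    rw [e1] at h1; rw [e2] at h2; linarith
  -- half-space bound on A
  have hhalf : ∀ y ∈ A, ⟪g, y⟫ ≤ 1 := by
    intro y hy
    have := hsub y
    have hy1 : gauge A y ≤ 1 := gauge_le_one_of_mem hy
    rw [inner_sub_right, hgx] at this
    linarith
  -- g ∈ V
  have hgV : g ∈ V := by
    rw [← Submodule.orthogonal_orthogonal V]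
    intro v hv
    rw [real_inner_comm]
    exact hker v hv
  -- projection preserves inner with g
  have hproj : ∀ y : E, ⟪g, (V.orthogonalProjectionOnto y : E)⟫ = ⟪g, y⟫ := by
    intro y
    have hmem : y - (V.orthogonalProjectionOnto y : E) ∈ Vᗮ :=
      V.sub_starProjection_mem_orthogonal y
    have := hker _ hmem
    rw [inner_sub_right] at this
    linarith
  have hxA : x ∈ A := by
    have := hx.1
    rwa [hcpt.isClosed.closure_eq] at this
  constructor
  · exact subset_closure ⟨x, hxA, rfl⟩
  · -- not in interior
    intro hint
    rw [mem_interior_iff_mem_nhds, Metric.mem_nhds_iff] at hint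
    obtain ⟨ε, hε, hball⟩ := hint
    have hgne : g ≠ 0 := by
      intro h; rw [h] at hgx; simp at hgx
    set gV : V := ⟨g, hgV⟩ with hgVdef
    have hgVnorm : ‖gV‖ = ‖g‖ := rfl
    have hgnorm : 0 < ‖g‖ := norm_pos_iff.mpr hgne
    set c : ℝ := ε / (2 * ‖g‖) with hc
    have hcpos : 0 < c := by positivity
    set w : V := V.orthogonalProjectionOnto x + c • gV with hw
    have hwball : w ∈ Metric.ball (V.orthogonalProjectionOnto x) ε := by
      rw [Metric.mem_ball, dist_eq_norm]
      have : w - V.orthogonalProjectionOnto x = c • gV := by rw [hw]; abel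
      rw [this, norm_smul, hgVnorm]
      rw [Real.norm_of_nonneg hcpos.le, hc]
      rw [div_mul_eq_mul_div]
      rw [div_lt_iff₀ (by positivity)]
      nlinarith
    obtain ⟨a, haA, haw⟩ := hball hwball
    have h1 : ⟪g, (w : E)⟫ = 1 + c * ‖g‖ ^ 2 := by
      have : (w : E) = (V.orthogonalProjectionOnto x : E) + c • g := by
        rw [hw]; simp [hgVdef]
      rw [this, inner_add_right, hproj x, hgx, inner_smul_right,
        real_inner_self_eq_norm_sq]
    have h2 : ⟪g, (w : E)⟫ ≤ 1 := by
      rw [← haw, hproj a]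
      exact hhalf a haA
    nlinarith [mul_pos hcpos (pow_pos hgnorm 2)]
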